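/- Let N be a squarefree integer with at least two distinct prime divisors, and let e : (ℤ/Nℤ)/±1 → ℤ be a function satisfying the orbit condition: ∑_{h ∈ O_{a,p}} e(h) = 0 for every prime p dividing N and every a ∈ ℤ/Nℤ. Then for every integer g with d := gcd(g,N) < N, one has e([g]) = μ(d) · ∑_{[h]} e([h]), where the sum ranges over the classes [h] ∈ (ℤ/Nℤ)/±1 with gcd(h,N) = 1 and h ≡ ±g (mod N/d), each such class counted once, and μ is the Möbius function. -/

import Mathlib

open scoped Classical

/-- The setoid on `ℤ/Mℤ` identifying `x` with `−x`. -/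
def negSetoid (M : ℕ) : Setoid (ZMod M) where
  r x y := x = y ∨ x = -y
  iseqv := by
    constructor
    · intro x; exact Or.inl rfl
    · rintro x y (rfl | rfl)
      · exact Or.inl rfl
      · exact Or.inr (neg_neg _).symm
    · rintro x y z (rfl | rfl) (rfl | rfl)
      · exact Or.inl rfl
      · exact Or.inr rfl
      · exact Or.inr rfl
      · exact Or.inl (neg_neg _)

/-- The quotient `(ℤ/Mℤ)/±1` of `ℤ/Mℤ` by the involution `x ↦ −x`. -/
abbrev ZModPM (M : ℕ) : Type := Quotient (negSetoid M)

/-- The class `[x] ∈ (ℤ/Mℤ)/±1` of `x ∈ ℤ/Mℤ`. -/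
def mkPM (M : ℕ) (x : ZMod M) : ZModPM M := Quotient.mk (negSetoid M) x

/-- For `a ∈ ℤ/Mℤ` and a divisor `K` of `M`, the orbit `O_{a,K}`: the image in
`(ℤ/Mℤ)/±1` of the set `{a + k·M/K : k = 0, 1, …, K−1}`. -/
noncomputable def orbitPM (M : ℕ) (a : ZMod M) (K : ℕ) : Finset (ZModPM M) :=
  (Finset.range K).image (fun k => mkPM M (a + (k : ZMod M) * ((M / K : ℕ) : ZMod M)))

lemma mkPM_eq_iff {M : ℕ} (a b : ZMod M) : mkPM M a = mkPM M b ↔ a = b ∨ a = -b := by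
  constructor
  · intro h
    have := Quotient.exact h
    exact this
  · intro h
    apply Quotient.sound
    exact h

lemma mkPM_int_eq_iff (M : ℕ) (a b : ℤ) :
    mkPM M (a : ZMod M) = mkPM M (b : ZMod M) ↔ a ≡ b [ZMOD M] ∨ a ≡ -b [ZMOD M] := by
  rw [mkPM_eq_iff, ← Int.cast_neg, ZMod.intCast_eq_intCast_iff, ZMod.intCast_eq_intCast_iff]

lemma mkPM_descend {N M2 : ℕ} (hdvd : M2 ∣ N) {a b : ℤ}
    (hab : mkPM N (a : ZMod N) = mkPM N (b : ZMod N)) :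
    mkPM M2 (a : ZMod M2) = mkPM M2 (b : ZMod M2) := by
  rw [mkPM_int_eq_iff] at hab ⊢
  have hd : (M2 : ℤ) ∣ (N : ℤ) := Int.natCast_dvd_natCast.mpr hdvd
  rcases hab with h | h
  · exact Or.inl (h.of_dvd hd)
  · exact Or.inr (h.of_dvd hd)

lemma mem_orbitPM {M : ℕ} {a : ZMod M} {K : ℕ} {x : ZModPM M} :
    x ∈ orbitPM M a K ↔
      ∃ k : ℕ, k < K ∧ mkPM M (a + (k : ZMod M) * ((M / K : ℕ) : ZMod M)) = x := by
  unfold orbitPM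
  rw [Finset.mem_image]
  simp only [Finset.bind_def, Finset.mem_sup, Finset.mem_range]
  constructor
  · rintro ⟨z, ⟨k, hk, hkz⟩, hzx⟩
    refine ⟨k, hk, ?_⟩
    have : z = (k : ZMod M) := by simpa using hkz
    rw [← hzx, this]
  · rintro ⟨k, hk, hx⟩
    exact ⟨(k : ZMod M), ⟨k, hk, by simp⟩, hx⟩

set_option maxHeartbeats 1000000 in
theorem exponent_relation_aux (N : ℕ) [NeZero N] (hsf : Squarefree N)
    (e : ZModPM N → ℤ)
    (he : ∀ p : ℕ, p.Prime → p ∣ N → ∀ a : ZMod N, ∑ h ∈ orbitPM N a p, e h = 0) :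
    ∀ d : ℕ, ∀ g : ℤ, Int.gcd g N = d → d < N →
      e (mkPM N (g : ZMod N)) =
        (ArithmeticFunction.moebius d) *
          ∑ cl ∈ Finset.univ.filter (fun cl : ZModPM N =>
              ∃ h : ℤ, mkPM N (h : ZMod N) = cl ∧ Int.gcd h N = 1 ∧
                ((h : ZMod (N / d)) = (g : ZMod (N / d)) ∨
                  (h : ZMod (N / d)) = -(g : ZMod (N / d)))),
            e cl := by
  intro D
  induction D using Nat.strong_induction_on with
  | _ d IH =>
  intro g hgd hdN
  have hN0 : N ≠ 0 := NeZero.ne N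
  rcases Nat.eq_zero_or_pos d with rfl | hd0
  · exfalso
    have := Int.gcd_eq_zero_iff.mp hgd
    exact hN0 (by exact_mod_cast this.2)
  rcases eq_or_ne d 1 with hd1 | hdne
  · -- base case d = 1
    subst hd1
    have hset : (Finset.univ.filter (fun cl : ZModPM N =>
        ∃ h : ℤ, mkPM N (h : ZMod N) = cl ∧ Int.gcd h N = 1 ∧
          ((h : ZMod (N / 1)) = (g : ZMod (N / 1)) ∨
            (h : ZMod (N / 1)) = -(g : ZMod (N / 1))))) = {mkPM N (g : ZMod N)} := by
      ext cl
      simp only [Finset.mem_filter, Finset.mem_univ, true_and, Finset.mem_singleton,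
        Nat.div_one]
      constructor
      · rintro ⟨h, rfl, _, hmod⟩
        rw [Nat.div_one] at hmod
        exact (mkPM_eq_iff _ _).mpr hmod
      · rintro rfl
        exact ⟨g, rfl, hgd, Or.inl rfl⟩
    rw [hset, Finset.sum_singleton]
    simp
  · -- inductive step, 2 ≤ d
    have hd2 : 2 ≤ d := by omega
    obtain ⟨p, hp, hpd⟩ : ∃ p : ℕ, p.Prime ∧ p ∣ d :=
      ⟨d.minFac, Nat.minFac_prime (by omega), Nat.minFac_dvd d⟩
    have hdvdN : d ∣ N := by
      have : (d : ℤ) ∣ (N : ℤ) := by rw [← hgd]; exact Int.gcd_dvd_right _ _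
      exact_mod_cast this
    have hdg : (d : ℤ) ∣ g := by rw [← hgd]; exact Int.gcd_dvd_left _ _
    obtain ⟨c, hc⟩ := id hpd
    obtain ⟨m, hm⟩ := id hdvdN
    have hp0 : p ≠ 0 := hp.pos.ne'
    have hc0 : c ≠ 0 := by rintro rfl; omega
    have hm0 : m ≠ 0 := by rintro rfl; omega
    obtain ⟨M, hM_def⟩ : ∃ M : ℕ, M = c * m := ⟨_, rfl⟩
    obtain ⟨M2, hM2_def⟩ : ∃ M2 : ℕ, M2 = p * m := ⟨_, rfl⟩
    have hNM : N = p * M := by rw [hm, hc, hM_def]; ring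
    have hM0 : M ≠ 0 := by rw [hM_def]; positivity
    have hMdiv : N / p = M := by rw [hNM]; exact Nat.mul_div_cancel_left M hp.pos
    have hNc : N = c * M2 := by rw [hm, hc, hM2_def]; ring
    have hNcdiv : N / c = M2 := by
      rw [hNc]; exact Nat.mul_div_cancel_left M2 (Nat.pos_of_ne_zero hc0)
    have hNddiv : N / d = m := by rw [hm]; exact Nat.mul_div_cancel_left m hd0
    have hM2N : M2 ∣ N := ⟨c, by rw [hNc]; ring⟩
    have hmM : m ∣ M := ⟨c, by rw [hM_def]; ring⟩
    -- squarefree/coprime facts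
    have hsfd : Squarefree d := hsf.squarefree_of_dvd hdvdN
    have hcop_pc : Nat.Coprime p c := by
      rw [hc] at hsfd; exact (Nat.squarefree_mul_iff.mp hsfd).1
    have hcop_dm : Nat.Coprime d m := by
      rw [hm] at hsf; exact (Nat.squarefree_mul_iff.mp hsf).1
    have hcop_pM : Nat.Coprime p M := by
      rw [hNM] at hsf; exact (Nat.squarefree_mul_iff.mp hsf).1
    have hpc' : ¬ p ∣ c := hp.coprime_iff_not_dvd.mp hcop_pc
    have hpM' : ¬ p ∣ M := hp.coprime_iff_not_dvd.mp hcop_pM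
    have hpz : Prime (p : ℤ) := Nat.prime_iff_prime_int.mp hp
    have hpg : (p : ℤ) ∣ g := dvd_trans (by exact_mod_cast Int.natCast_dvd_natCast.mpr hpd) hdg
    have hgcd_nat : ∀ z : ℤ, ∀ n : ℕ, Int.gcd z (n : ℤ) = Nat.gcd z.natAbs n := by
      intro z n; simp [Int.gcd]
    have hcop_mg : Nat.Coprime m g.natAbs := by
      have h1 : Nat.gcd g.natAbs m ∣ d := by
        rw [← hgd, hgcd_nat]
        exact Nat.dvd_gcd (Nat.gcd_dvd_left _ _)
          ((Nat.gcd_dvd_right _ _).trans ⟨d, by rw [hm]; ring⟩)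
      have h2 : Nat.gcd g.natAbs m ∣ Nat.gcd d m :=
        Nat.dvd_gcd h1 (Nat.gcd_dvd_right _ _)
      rw [Nat.Coprime] at hcop_dm
      rw [Nat.Coprime, Nat.gcd_comm]
      exact Nat.dvd_one.mp (hcop_dm ▸ h2)
    -- the `m ∣ 2g ⟹ N ∣ 2g` lemma
    have h2g : (m : ℤ) ∣ 2 * g → (N : ℤ) ∣ 2 * g := by
      intro hdvd
      have h2 : m ∣ (2 * g).natAbs := Int.natCast_dvd.mp hdvd
      have h2' : m ∣ 2 * g.natAbs := by simpa [Int.natAbs_mul] using h2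
      have hm2 : m ∣ 2 := hcop_mg.dvd_of_dvd_mul_right h2'
      have hmle : m ≤ 2 := Nat.le_of_dvd (by norm_num) hm2
      have hm2' : m = 2 := by
        -- m ≥ 2 since d < N = d * m
        have hlt : d < d * m := by rw [← hm]; exact hdN
        rcases m with _ | _ | m'
        · simp at hlt
        · omega
        · omega
      have : (N : ℤ) = 2 * d := by rw [hm, hm2']; push_cast; ring
      rw [this]
      exact mul_dvd_mul_left 2 hdg
    -- key lemma A : same sign forces equal k
    have lemA : ∀ k₁ k₂ : ℕ, k₁ < p → k₂ < p →
        (M2 : ℤ) ∣ ((g + k₁ * M) - (g + k₂ * M)) → k₁ = k₂ := by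
      intro k₁ k₂ hk₁ hk₂ hdvd
      have h1 : (M2 : ℤ) ∣ ((k₁ : ℤ) - k₂) * M := by
        have : ((g + k₁ * M) - (g + k₂ * M)) = ((k₁ : ℤ) - k₂) * M := by ring
        rwa [this] at hdvd
      have h2 : (p : ℤ) * m ∣ (((k₁ : ℤ) - k₂) * c) * m := by
        have e1 : (M2 : ℤ) = (p : ℤ) * m := by rw [hM2_def]; push_cast; ring
        have e2 : ((k₁ : ℤ) - k₂) * M = (((k₁ : ℤ) - k₂) * c) * m := by
          rw [hM_def]; push_cast; ring
        rwa [e1, e2] at h1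
      have hmz : (m : ℤ) ≠ 0 := by exact_mod_cast hm0
      have h3 : (p : ℤ) ∣ ((k₁ : ℤ) - k₂) * c := (mul_dvd_mul_iff_right hmz).mp h2
      have h4 : (p : ℤ) ∣ ((k₁ : ℤ) - k₂) := by
        rcases hpz.dvd_mul.mp h3 with h | h
        · exact h
        · exact absurd (Int.natCast_dvd_natCast.mp (by exact_mod_cast h)) hpc'
      have h5 : (k₁ : ℤ) - k₂ = 0 :=
        Int.eq_zero_of_abs_lt_dvd h4 (by rw [abs_sub_lt_iff]; constructor <;> omega)
      omega
    -- key lemma B : opposite sign mod M2 forces equality of classes mod N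
    have lemB : ∀ k₁ k₂ : ℕ,
        (M2 : ℤ) ∣ ((g + k₁ * M) + (g + k₂ * M)) →
        (N : ℤ) ∣ ((g + k₁ * M) + (g + k₂ * M)) := by
      intro k₁ k₂ hdvd
      have hsum : ((g + k₁ * M) + (g + k₂ * M)) = 2 * g + ((k₁ : ℤ) + k₂) * M := by ring
      rw [hsum] at hdvd ⊢
      have hmM2 : (m : ℤ) ∣ (M2 : ℤ) := Int.natCast_dvd_natCast.mpr ⟨p, by rw [hM2_def]; ring⟩
      have hmMz : (m : ℤ) ∣ (M : ℤ) := Int.natCast_dvd_natCast.mpr hmM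
      have hm2g : (m : ℤ) ∣ 2 * g := by
        have h1 := dvd_trans hmM2 hdvd
        have h2 : (m : ℤ) ∣ ((k₁ : ℤ) + k₂) * M := Dvd.dvd.mul_left hmMz _
        simpa using dvd_sub h1 h2
      have hN2g : (N : ℤ) ∣ 2 * g := h2g hm2g
      have hM2kM : (M2 : ℤ) ∣ ((k₁ : ℤ) + k₂) * M := by
        have := dvd_sub hdvd (dvd_trans (Int.natCast_dvd_natCast.mpr hM2N) hN2g)
        simpa using this
      -- deduce p ∣ k₁ + k₂
      have h2 : (p : ℤ) * m ∣ (((k₁ : ℤ) + k₂) * c) * m := by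
        have e1 : (M2 : ℤ) = (p : ℤ) * m := by rw [hM2_def]; push_cast; ring
        have e2 : ((k₁ : ℤ) + k₂) * M = (((k₁ : ℤ) + k₂) * c) * m := by
          rw [hM_def]; push_cast; ring
        rwa [e1, e2] at hM2kM
      have hmz : (m : ℤ) ≠ 0 := by exact_mod_cast hm0
      have h3 : (p : ℤ) ∣ ((k₁ : ℤ) + k₂) * c := (mul_dvd_mul_iff_right hmz).mp h2
      have h4 : (p : ℤ) ∣ ((k₁ : ℤ) + k₂) := by
        rcases hpz.dvd_mul.mp h3 with h | h
        · exact h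
        · exact absurd (Int.natCast_dvd_natCast.mp (by exact_mod_cast h)) hpc'
      have hNkM : (N : ℤ) ∣ ((k₁ : ℤ) + k₂) * M := by
        obtain ⟨t, ht⟩ := h4
        refine ⟨t, ?_⟩
        rw [ht, hNM]; push_cast; ring
      exact dvd_add hN2g hNkM
    -- gcd computation for shifted elements
    have lemGcd : ∀ k : ℕ, ¬ (p : ℤ) ∣ (k : ℤ) → Int.gcd (g + k * M) N = c := by
      intro k hpk
      set r : ℤ := g + k * M with hr_def
      set t : ℕ := Int.gcd r N with ht_def
      have htr : (t : ℤ) ∣ r := Int.gcd_dvd_left _ _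
      have htN : t ∣ N := by
        have : (t : ℤ) ∣ (N : ℤ) := Int.gcd_dvd_right _ _
        exact_mod_cast this
      have hpt : ¬ p ∣ t := by
        intro hpt
        have h1 : (p : ℤ) ∣ r := dvd_trans (Int.natCast_dvd_natCast.mpr hpt) htr
        have h2 : (p : ℤ) ∣ (k : ℤ) * M := by
          have := dvd_sub h1 hpg
          simpa [hr_def, sub_eq_iff_eq_add] using this
        rcases hpz.dvd_mul.mp h2 with h | h
        · exact hpk h
        · exact hpM' (Int.natCast_dvd_natCast.mp (by exact_mod_cast h))
      have hcop_tp : Nat.Coprime t p := (hp.coprime_iff_not_dvd.mpr hpt).symm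
      have htM : t ∣ M := hcop_tp.dvd_of_dvd_mul_left (show t ∣ p * M by rw [← hNM]; exact htN)
      have htg : (t : ℤ) ∣ g := by
        have h1 : (t : ℤ) ∣ (k : ℤ) * M :=
          Dvd.dvd.mul_left (Int.natCast_dvd_natCast.mpr htM) _
        have := dvd_sub htr h1
        simpa [hr_def] using this
      have htd : t ∣ d := by
        rw [← hgd, hgcd_nat]
        exact Nat.dvd_gcd (Int.natCast_dvd.mp htg) htN
      have htc : t ∣ c := hcop_tp.dvd_of_dvd_mul_left (show t ∣ p * c by rw [← hc]; exact htd)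
      have hct : c ∣ t := by
        have hcr : (c : ℤ) ∣ r := by
          have h1 : (c : ℤ) ∣ g := dvd_trans (Int.natCast_dvd_natCast.mpr ⟨p, by rw [hc]; ring⟩) hdg
          have h2 : (c : ℤ) ∣ (k : ℤ) * M :=
            Dvd.dvd.mul_left (Int.natCast_dvd_natCast.mpr ⟨m, hM_def⟩) _
          exact dvd_add h1 h2
        have hcN : (c : ℤ) ∣ (N : ℤ) := Int.natCast_dvd_natCast.mpr ⟨M2, hNc⟩
        exact_mod_cast Int.dvd_gcd hcr hcN
      exact Nat.dvd_antisymm htc hct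
    -- orbit facts
    have horb := he p hp ⟨M, hNM⟩ (g : ZMod N)
    set O : Finset (ZModPM N) := orbitPM N (g : ZMod N) p with hO_def
    have hcast : ∀ k : ℕ, ((g + k * M : ℤ) : ZMod N)
        = (g : ZMod N) + (k : ZMod N) * ((N / p : ℕ) : ZMod N) := by
      intro k; rw [hMdiv]; push_cast; ring
    have hmemO : ∀ k : ℕ, k < p → mkPM N ((g + k * M : ℤ) : ZMod N) ∈ O := by
      intro k hk
      rw [hO_def]
      exact mem_orbitPM.mpr ⟨k, hk, by rw [hcast]⟩
    have hgO : mkPM N (g : ZMod N) ∈ O := by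
      have := hmemO 0 hp.pos
      simpa using this
    -- every element of O is of the claimed form
    have hO_form : ∀ cl ∈ O, ∃ k : ℕ, k < p ∧ cl = mkPM N ((g + k * M : ℤ) : ZMod N) := by
      intro cl hcl
      rw [hO_def] at hcl
      obtain ⟨k, hk, hkcl⟩ := mem_orbitPM.mp hcl
      exact ⟨k, hk, by rw [← hkcl, hcast]⟩
    -- elements of O.erase [g] have representatives with p ∤ k
    have hO_erase_form : ∀ cl ∈ O.erase (mkPM N (g : ZMod N)),
        ∃ k : ℕ, k < p ∧ ¬ (p : ℤ) ∣ (k : ℤ) ∧ cl = mkPM N ((g + k * M : ℤ) : ZMod N) := by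
      intro cl hcl
      obtain ⟨hne, hclO⟩ := Finset.mem_erase.mp hcl
      obtain ⟨k, hk, hkcl⟩ := hO_form cl hclO
      refine ⟨k, hk, ?_, hkcl⟩
      intro hpk
      have hk0 : k = 0 :=
        Nat.eq_zero_of_dvd_of_lt (Int.natCast_dvd_natCast.mp (by exact_mod_cast hpk)) hk
      subst hk0
      apply hne
      rw [hkcl]
      norm_num
    -- the auxiliary fiber sets
    set G : ZModPM N → Finset (ZModPM N) := fun cl =>
      Finset.univ.filter (fun x => ∃ h r : ℤ, mkPM N (h : ZMod N) = x ∧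
        mkPM N (r : ZMod N) = cl ∧ Int.gcd h N = 1 ∧
        ((h : ZMod M2) = (r : ZMod M2) ∨ (h : ZMod M2) = -(r : ZMod M2))) with hG_def
    -- G cl equals the filter set of the statement for the representative g + k M
    have hGF : ∀ k : ℕ, ¬ (p : ℤ) ∣ (k : ℤ) →
        (Finset.univ.filter (fun x : ZModPM N =>
          ∃ h : ℤ, mkPM N (h : ZMod N) = x ∧ Int.gcd h N = 1 ∧
            ((h : ZMod (N / c)) = ((g + k * M : ℤ) : ZMod (N / c)) ∨
              (h : ZMod (N / c)) = -((g + k * M : ℤ) : ZMod (N / c)))))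
          = G (mkPM N ((g + k * M : ℤ) : ZMod N)) := by
      intro k hpk
      rw [hNcdiv]
      ext x
      simp only [hG_def, Finset.mem_filter, Finset.mem_univ, true_and]
      constructor
      · rintro ⟨h, hx, h1, hmod⟩
        exact ⟨h, g + k * M, hx, rfl, h1, hmod⟩
      · rintro ⟨h, r, hx, hr, h1, hmod⟩
        refine ⟨h, hx, h1, ?_⟩
        have h2 : mkPM M2 (h : ZMod M2) = mkPM M2 (r : ZMod M2) :=
          (mkPM_eq_iff _ _).mpr hmod
        have h3 : mkPM M2 (r : ZMod M2) = mkPM M2 ((g + k * M : ℤ) : ZMod M2) :=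
          mkPM_descend hM2N hr
        exact (mkPM_eq_iff _ _).mp (h2.trans h3)
    -- covering : the statement's filter for g is the disjoint union of G over O.erase [g]
    have hcover : (Finset.univ.filter (fun cl : ZModPM N =>
        ∃ h : ℤ, mkPM N (h : ZMod N) = cl ∧ Int.gcd h N = 1 ∧
          ((h : ZMod (N / d)) = (g : ZMod (N / d)) ∨
            (h : ZMod (N / d)) = -(g : ZMod (N / d)))))
        = (O.erase (mkPM N (g : ZMod N))).biUnion G := by
      rw [hNddiv]
      ext x
      simp only [Finset.mem_filter, Finset.mem_univ, true_and, Finset.mem_biUnion]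
      constructor
      · rintro ⟨h, hx, h1, hmod⟩
        -- normalize the sign
        have hmain : ∃ h : ℤ, mkPM N (h : ZMod N) = x ∧ Int.gcd h N = 1 ∧
            (h : ZMod m) = (g : ZMod m) := by
          rcases hmod with hmod | hmod
          · exact ⟨h, hx, h1, hmod⟩
          · refine ⟨-h, ?_, by rwa [Int.neg_gcd], by push_cast; rw [hmod]; ring⟩
            rw [← hx]
            exact Quotient.sound (Or.inr (by push_cast; ring))
        obtain ⟨h, hx, h1, hmod⟩ := hmain
        have hs : (m : ℤ) ∣ h - g := by
          rw [ZMod.intCast_eq_intCast_iff] at hmod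
          exact Int.ModEq.dvd hmod.symm
        obtain ⟨s, hs⟩ := hs
        have hps : ¬ (p : ℤ) ∣ s := by
          intro hps
          have hph : (p : ℤ) ∣ h := by
            have : h = g + m * s := by omega
            rw [this]
            exact dvd_add hpg (Dvd.dvd.mul_left hps _)
          have hpN : (p : ℤ) ∣ (N : ℤ) := Int.natCast_dvd_natCast.mpr ⟨M, hNM⟩
          have : (p : ℤ) ∣ (Int.gcd h N : ℤ) := Int.dvd_coe_gcd hph hpN
          rw [h1] at this
          have hp1 : p ∣ 1 := by exact_mod_cast this
          exact hp.ne_one (Nat.dvd_one.mp hp1)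
        -- choose k with k * c ≡ s  mod p
        haveI : Fact p.Prime := ⟨hp⟩
        set kz : ZMod p := (s : ZMod p) * (c : ZMod p)⁻¹ with hkz_def
        set k : ℕ := kz.val with hk_def
        have hkval : ((k : ℕ) : ZMod p) = kz := by
          rw [hk_def, ZMod.natCast_val, ZMod.cast_id]
        have hk_lt : k < p := ZMod.val_lt kz
        have hcp_ne : (c : ZMod p) ≠ 0 := by
          rw [Ne, ZMod.natCast_eq_zero_iff]
          exact hpc'
        have hkc : (p : ℤ) ∣ ((k : ℤ) * c - s) := by
          have hz : (((k : ℤ) * c - s : ℤ) : ZMod p) = 0 := by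
            push_cast
            rw [hkval, hkz_def, mul_assoc, inv_mul_cancel₀ hcp_ne, mul_one, sub_self]
          exact (ZMod.intCast_zmod_eq_zero_iff_dvd _ _).mp hz
        have hpk : ¬ (p : ℤ) ∣ (k : ℤ) := by
          intro hpk
          apply hps
          have h1 : (p : ℤ) ∣ (k : ℤ) * c := Dvd.dvd.mul_right hpk _
          have := dvd_sub h1 hkc
          simpa using this
        have hM2dvd : (M2 : ℤ) ∣ h - (g + k * M) := by
          obtain ⟨u, hu⟩ := hkc
          refine ⟨-u, ?_⟩
          have e1 : h - (g + k * M) = m * s - (k : ℤ) * (c * m) := by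
            rw [← hs]; push_cast [hM_def]; ring
          rw [e1]
          have : (k : ℤ) * c - s = p * u := hu
          push_cast [hM2_def]
          nlinarith [hu]
        refine ⟨mkPM N ((g + k * M : ℤ) : ZMod N), ?_, ?_⟩
        · rw [Finset.mem_erase]
          refine ⟨?_, hmemO k hk_lt⟩
          intro heq
          rcases (mkPM_int_eq_iff N _ _).mp heq with hcon | hcon
          · -- g + kM ≡ g mod N ⇒ p ∣ k
            have : (N : ℤ) ∣ (k : ℤ) * M := by
              have := hcon.dvd
              simpa using (dvd_neg.mpr this)
            have h2 : (p : ℤ) * M ∣ (k : ℤ) * M := by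
              rwa [show ((N : ℤ)) = (p : ℤ) * M by rw [hNM]; push_cast; ring] at this
            have hMz : (M : ℤ) ≠ 0 := by
              have : M ≠ 0 := by rw [hM_def]; positivity
              exact_mod_cast this
            exact hpk ((mul_dvd_mul_iff_right hMz).mp h2)
          · -- g + kM ≡ -g mod N ⇒ m ∣ 2g ⇒ N ∣ 2g ⇒ p ∣ k
            have hNdvd : (N : ℤ) ∣ 2 * g + (k : ℤ) * M := by
              have := hcon.dvd
              have e1 : (-g : ℤ) - (g + k * M) = -(2 * g + (k : ℤ) * M) := by ring
              rw [e1] at this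
              exact (dvd_neg.mp this)
            have hm2g : (m : ℤ) ∣ 2 * g := by
              have h1 : (m : ℤ) ∣ (N : ℤ) := Int.natCast_dvd_natCast.mpr ⟨d, by rw [hm]; ring⟩
              have h2 : (m : ℤ) ∣ (k : ℤ) * M :=
                Dvd.dvd.mul_left (Int.natCast_dvd_natCast.mpr hmM) _
              have := dvd_sub (dvd_trans h1 hNdvd) h2
              simpa using this
            have hN2g : (N : ℤ) ∣ 2 * g := h2g hm2g
            have : (N : ℤ) ∣ (k : ℤ) * M := by
              have := dvd_sub hNdvd hN2g
              simpa using this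
            have h2 : (p : ℤ) * M ∣ (k : ℤ) * M := by
              rwa [show ((N : ℤ)) = (p : ℤ) * M by rw [hNM]; push_cast; ring] at this
            have hMz : (M : ℤ) ≠ 0 := by
              have : M ≠ 0 := by rw [hM_def]; positivity
              exact_mod_cast this
            exact hpk ((mul_dvd_mul_iff_right hMz).mp h2)
        · simp only [hG_def, Finset.mem_filter, Finset.mem_univ, true_and]
          refine ⟨h, g + k * M, hx, rfl, h1, Or.inl ?_⟩
          rw [ZMod.intCast_eq_intCast_iff]
          exact Int.ModEq.symm (Int.modEq_iff_dvd.mpr hM2dvd)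
      · rintro ⟨cl, hcl, hxG⟩
        simp only [hG_def, Finset.mem_filter, Finset.mem_univ, true_and] at hxG
        obtain ⟨h, r, hx, hr, h1, hmod⟩ := hxG
        obtain ⟨k, hk, hpk, hkcl⟩ := hO_erase_form cl hcl
        refine ⟨h, hx, h1, ?_⟩
        have h2 : mkPM M2 (h : ZMod M2) = mkPM M2 (r : ZMod M2) :=
          (mkPM_eq_iff _ _).mpr hmod
        have h3 : mkPM M2 (r : ZMod M2) = mkPM M2 ((g + k * M : ℤ) : ZMod M2) :=
          mkPM_descend hM2N (by rw [hr, hkcl])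
        have h4 := (mkPM_int_eq_iff M2 _ _).mp (h2.trans h3)
        have hmm2 : (m : ℤ) ∣ (M2 : ℤ) := Int.natCast_dvd_natCast.mpr ⟨p, by rw [hM2_def]; ring⟩
        have hmkM : (m : ℤ) ∣ (k : ℤ) * M := Dvd.dvd.mul_left (Int.natCast_dvd_natCast.mpr hmM) _
        rcases h4 with h4 | h4
        · left
          rw [ZMod.intCast_eq_intCast_iff]
          have h5 : h ≡ g + k * M [ZMOD m] := h4.of_dvd hmm2
          have h6 : (m : ℤ) ∣ (g + k * M) - g := by simpa using hmkM
          exact h5.trans (Int.ModEq.symm (Int.modEq_iff_dvd.mpr (by simpa using dvd_neg.mpr h6)))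
        · right
          rw [← Int.cast_neg, ZMod.intCast_eq_intCast_iff]
          have h5 : h ≡ -(g + k * M) [ZMOD m] := h4.of_dvd hmm2
          have h6 : (m : ℤ) ∣ (-(g + k * M)) - (-g) := by simpa using (dvd_neg.mpr hmkM)
          exact h5.trans (Int.ModEq.symm (Int.modEq_iff_dvd.mpr (by simpa using dvd_neg.mpr h6)))
    -- disjointness
    have hdisj : (↑(O.erase (mkPM N (g : ZMod N))) : Set (ZModPM N)).PairwiseDisjoint G := by
      intro cl₁ hcl₁ cl₂ hcl₂ hne
      show Disjoint (G cl₁) (G cl₂)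
      rw [Finset.mem_coe] at hcl₁ hcl₂
      obtain ⟨k₁, hk₁, hpk₁, hkcl₁⟩ := hO_erase_form cl₁ hcl₁
      obtain ⟨k₂, hk₂, hpk₂, hkcl₂⟩ := hO_erase_form cl₂ hcl₂
      rw [Finset.disjoint_left]
      intro x hx₁ hx₂
      apply hne
      simp only [hG_def, Finset.mem_filter, Finset.mem_univ, true_and] at hx₁ hx₂
      obtain ⟨h₁, r₁, hh₁, hr₁, hg₁, hm₁⟩ := hx₁
      obtain ⟨h₂, r₂, hh₂, hr₂, hg₂, hm₂⟩ := hx₂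
      have e₁ : mkPM M2 (h₁ : ZMod M2) = mkPM M2 ((g + k₁ * M : ℤ) : ZMod M2) :=
        ((mkPM_eq_iff _ _).mpr hm₁).trans (mkPM_descend hM2N (by rw [hr₁, hkcl₁]))
      have e₂ : mkPM M2 (h₂ : ZMod M2) = mkPM M2 ((g + k₂ * M : ℤ) : ZMod M2) :=
        ((mkPM_eq_iff _ _).mpr hm₂).trans (mkPM_descend hM2N (by rw [hr₂, hkcl₂]))
      have e₃ : mkPM M2 (h₁ : ZMod M2) = mkPM M2 (h₂ : ZMod M2) :=
        mkPM_descend hM2N (hh₁.trans hh₂.symm)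
      have e₄ : mkPM M2 ((g + k₁ * M : ℤ) : ZMod M2)
          = mkPM M2 ((g + k₂ * M : ℤ) : ZMod M2) := e₁.symm.trans (e₃.trans e₂)
      rcases (mkPM_int_eq_iff M2 _ _).mp e₄ with h5 | h5
      · have := lemA k₁ k₂ hk₁ hk₂ (by simpa using dvd_neg.mpr h5.dvd)
        rw [hkcl₁, hkcl₂, this]
      · have hM2sum : (M2 : ℤ) ∣ ((g + k₁ * M) + (g + k₂ * M)) := by
          have := h5.dvd
          have e : (-(g + k₂ * M) : ℤ) - (g + k₁ * M) = -((g + k₁ * M) + (g + k₂ * M)) := by ring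
          rw [e] at this
          exact dvd_neg.mp this
        have hNsum := lemB k₁ k₂ hM2sum
        rw [hkcl₁, hkcl₂]
        rw [mkPM_int_eq_iff]
        right
        refine Int.modEq_iff_dvd.mpr ?_
        rw [show (-(g + k₂*M) : ℤ) - (g + k₁ * M) = -((g + k₁ * M) + (g + k₂ * M)) by ring]
        exact dvd_neg.mpr hNsum
    -- rewrite each e cl for cl in the erased orbit via the induction hypothesis
    have hcd : c < d := by
      have : 1 < p := hp.one_lt
      rcases Nat.lt_or_ge c d with h | h
      · exact h
      · exfalso; nlinarith [Nat.pos_of_ne_zero hc0]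
    have hkey : ∀ cl ∈ O.erase (mkPM N (g : ZMod N)),
        e cl = (ArithmeticFunction.moebius c) * ∑ x ∈ G cl, e x := by
      intro cl hcl
      obtain ⟨k, hk, hpk, hkcl⟩ := hO_erase_form cl hcl
      have hgcd := lemGcd k hpk
      have := IH c hcd (g + k * M) hgcd (lt_trans hcd hdN)
      rw [hkcl, this, hGF k hpk]
    -- orbit relation
    have horb' : e (mkPM N (g : ZMod N))
        = - ∑ cl ∈ O.erase (mkPM N (g : ZMod N)), e cl := by
      have h1 := Finset.add_sum_erase O e hgO
      rw [← h1] at horb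
      linarith
    rw [horb', Finset.sum_congr rfl hkey, ← Finset.mul_sum, hcover,
      Finset.sum_biUnion hdisj]
    have hmoeb : (ArithmeticFunction.moebius d : ℤ) = - ArithmeticFunction.moebius c := by
      rw [hc, ArithmeticFunction.isMultiplicative_moebius.map_mul_of_coprime hcop_pc,
        ArithmeticFunction.moebius_apply_prime hp]
      ring
    rw [hmoeb]
    ring

/-- **Exponent relation in the squarefree case.** Let `N` be squarefree with at least two
distinct prime divisors, and let `e : (ℤ/Nℤ)/±1 → ℤ` satisfy the orbit condition
`∑_{h ∈ O_{a,p}} e(h) = 0` for every prime `p | N` and every `a`. Then for every integer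
`g` with `d := gcd(g,N) < N`, `e([g]) = μ(d)·∑_{[h]} e([h])`, the sum ranging over the
classes `[h]` with `gcd(h,N) = 1` and `h ≡ ±g (mod N/d)`, each counted once. -/
theorem exponent_relation_squarefree (N : ℕ) [NeZero N] (hsf : Squarefree N)
    (hN : 2 ≤ N.primeFactors.card)
    (e : ZModPM N → ℤ)
    (he : ∀ p : ℕ, p.Prime → p ∣ N → ∀ a : ZMod N, ∑ h ∈ orbitPM N a p, e h = 0) :
    ∀ g : ℤ, Int.gcd g N < N →
      e (mkPM N (g : ZMod N)) =
        (ArithmeticFunction.moebius (Int.gcd g N)) *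
          ∑ cl ∈ Finset.univ.filter (fun cl : ZModPM N =>
              ∃ h : ℤ, mkPM N (h : ZMod N) = cl ∧ Int.gcd h N = 1 ∧
                ((h : ZMod (N / Int.gcd g N)) = (g : ZMod (N / Int.gcd g N)) ∨
                  (h : ZMod (N / Int.gcd g N)) = -(g : ZMod (N / Int.gcd g N)))),
            e cl := by
  intro g hg
  exact exponent_relation_aux N hsf e he (Int.gcd g N) g rfl hg
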